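/- Let K be an n×n real positive definite matrix, P a t×n real matrix, and σ > 0. Define F(r, ψ, S) = (1/(2σ²))·‖r − P.mulVec ψ‖² + (1/(2σ²))·trace(P * S * Pᵀ) + (1/2)·⟪ψ, K⁻¹.mulVec ψ⟫ + (1/2)·trace(K⁻¹ * S) − (1/2)·Real.log (S.det). Then F is jointly convex on ℝᵗ × ℝⁿ × {S : Matrix (Fin n) (Fin n) ℝ | S.PosDef}: this domain is a convex set and F satisfies the convexity inequality for convex combinations of any two points in it. -/

import Mathlib

open Matrix

open Matrix

section aux
variable {n : ℕ}

lemma posDef_conj {A M : Matrix (Fin n) (Fin n) ℝ} (hA : A.PosDef) (hM : IsUnit M.det) :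
    (Mᴴ * A * M).PosDef := by
  refine Matrix.PosDef.of_dotProduct_mulVec_pos ?_ ?_
  · exact isHermitian_conjTranspose_mul_mul M hA.1
  · intro x hx
    have hMx : M *ᵥ x ≠ 0 := by
      intro h
      apply hx
      have := congrArg (M⁻¹ *ᵥ ·) h
      simpa [mulVec_mulVec, nonsing_inv_mul M hM] using this
    simpa only [star_mulVec, dotProduct_mulVec, vecMul_vecMul] using hA.dotProduct_mulVec_pos hMx

lemma posDef_smul_add {S T : Matrix (Fin n) (Fin n) ℝ} (hS : S.PosDef) (hT : T.PosDef)
    {a b : ℝ} (ha : 0 ≤ a) (hb : 0 ≤ b) (hab : a + b = 1) :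
    (a • S + b • T).PosDef := by
  refine Matrix.PosDef.of_dotProduct_mulVec_pos ?_ ?_
  · show _ᴴ = _
    rw [conjTranspose_add, conjTranspose_smul, conjTranspose_smul, star_trivial, star_trivial,
      hS.1.eq, hT.1.eq]
  · intro x hx
    have hs := hS.dotProduct_mulVec_pos hx
    have ht := hT.dotProduct_mulVec_pos hx
    simp only [star_trivial] at hs ht ⊢
    rw [add_mulVec, smul_mulVec, smul_mulVec, dotProduct_add,
      dotProduct_smul, dotProduct_smul, smul_eq_mul, smul_eq_mul]
    rcases ha.lt_or_eq with ha' | ha'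
    · nlinarith
    · rcases hb.lt_or_eq with hb' | hb'
      · nlinarith
      · exfalso; rw [← ha', ← hb'] at hab; norm_num at hab

lemma logdet_aux {C : Matrix (Fin n) (Fin n) ℝ} (hC : C.PosDef) {a b : ℝ}
    (ha : 0 ≤ a) (hb : 0 ≤ b) (hab : a + b = 1) :
    b * Real.log C.det ≤ Real.log (a • (1 : Matrix (Fin n) (Fin n) ℝ) + b • C).det := by
  set μ := hC.1.eigenvalues with hμ
  have hμpos : ∀ i, 0 < μ i := hC.eigenvalues_pos
  set U : Matrix (Fin n) (Fin n) ℝ := (hC.1.eigenvectorUnitary : Matrix (Fin n) (Fin n) ℝ)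
    with hU
  have hdiag : (RCLike.ofReal ∘ μ : Fin n → ℝ) = μ := by funext i; simp
  have hspec : C = U * diagonal μ * star U := by
    have := hC.1.spectral_theorem
    rwa [hdiag] at this
  have hUU : U * star U = 1 := (Matrix.mem_unitaryGroup_iff).mp hC.1.eigenvectorUnitary.2
  have h1 : a • (1 : Matrix (Fin n) (Fin n) ℝ) + b • C
      = U * (diagonal (fun i => a + b * μ i)) * star U := by
    have h2 : diagonal (fun i => a + b * μ i)
        = a • (1 : Matrix (Fin n) (Fin n) ℝ) + b • diagonal μ := by
      rw [← diagonal_one, ← diagonal_smul, ← diagonal_smul, diagonal_add]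
      funext i
      simp
    rw [h2, Matrix.mul_add, Matrix.add_mul, Matrix.mul_smul, Matrix.mul_smul, Matrix.smul_mul,
      Matrix.smul_mul, Matrix.mul_one, hUU, ← hspec]
  have hsc : U.det * (star U).det = 1 := by rw [← det_mul, hUU, det_one]
  have hdet : (a • (1 : Matrix (Fin n) (Fin n) ℝ) + b • C).det = ∏ i, (a + b * μ i) := by
    rw [h1, det_mul, det_mul, det_diagonal]
    linear_combination (∏ i, (a + b * μ i)) * hsc
  have hdetC : C.det = ∏ i, μ i := hC.1.det_eq_prod_eigenvalues
  have hpos : ∀ i, 0 < a + b * μ i := by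
    intro i
    rcases hb.lt_or_eq with hb' | hb'
    · have := mul_pos hb' (hμpos i); linarith
    · rw [← hb'] at hab ⊢; simp only [zero_mul, add_zero]; linarith
  rw [hdet, hdetC, Real.log_prod (fun i _ => (hμpos i).ne'),
    Real.log_prod (fun i _ => (hpos i).ne'), Finset.mul_sum]
  apply Finset.sum_le_sum
  intro i _
  have hconc := strictConcaveOn_log_Ioi.concaveOn.2 (Set.mem_Ioi.mpr one_pos)
    (Set.mem_Ioi.mpr (hμpos i)) ha hb hab
  simpa [smul_eq_mul] using hconc

open scoped MatrixOrder in
lemma logdet_concave {A B : Matrix (Fin n) (Fin n) ℝ} (hA : A.PosDef) (hB : B.PosDef)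
    {a b : ℝ} (ha : 0 ≤ a) (hb : 0 ≤ b) (hab : a + b = 1) :
    a * Real.log A.det + b * Real.log B.det ≤ Real.log (a • A + b • B).det := by
  set R := CFC.sqrt A with hR
  have hR2 : R * R = A := CFC.sqrt_mul_sqrt_self A hA.posSemidef.nonneg
  have hRH : R.IsHermitian := (CFC.sqrt_nonneg A).posSemidef.1
  have hdetA : 0 < A.det := hA.det_pos
  have hdetB : 0 < B.det := hB.det_pos
  have hdetR : R.det * R.det = A.det := by rw [← det_mul, hR2]
  have hdetRne : R.det ≠ 0 := by
    intro h; rw [h, zero_mul] at hdetR; linarith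
  have hRunit : IsUnit R.det := isUnit_iff_ne_zero.mpr hdetRne
  have hRinvH : (R⁻¹)ᴴ = R⁻¹ := by rw [conjTranspose_nonsing_inv, hRH.eq]
  set C := R⁻¹ * B * R⁻¹ with hC
  have hCpos : C.PosDef := by
    have := posDef_conj (M := R⁻¹) hB (by simpa using hRunit.inv)
    rwa [hRinvH] at this
  have h3 : R * (R⁻¹ * B * R⁻¹) * R = B := by
    rw [show R * (R⁻¹ * B * R⁻¹) * R = (R * R⁻¹) * B * (R⁻¹ * R) from by
        simp only [Matrix.mul_assoc],
      mul_nonsing_inv _ hRunit, nonsing_inv_mul _ hRunit, Matrix.one_mul, Matrix.mul_one]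
  have key : a • A + b • B = R * (a • (1 : Matrix (Fin n) (Fin n) ℝ) + b • C) * R := by
    rw [Matrix.mul_add, Matrix.add_mul, Matrix.mul_smul, Matrix.mul_smul, Matrix.smul_mul,
      Matrix.smul_mul, Matrix.mul_one, hR2, hC, h3]
  have hdetC : C.det = B.det / A.det := by
    rw [hC, det_mul, det_mul, det_nonsing_inv, Ring.inverse_eq_inv', ← hdetR]
    field_simp
  have hXdet : 0 < (a • (1 : Matrix (Fin n) (Fin n) ℝ) + b • C).det :=
    (posDef_smul_add Matrix.PosDef.one hCpos ha hb hab).det_pos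
  have hdet : (a • A + b • B).det = A.det * (a • (1 : Matrix (Fin n) (Fin n) ℝ) + b • C).det := by
    rw [key, det_mul, det_mul, ← hdetR]; ring
  have haux := logdet_aux hCpos ha hb hab
  rw [hdetC, Real.log_div hdetB.ne' hdetA.ne'] at haux
  rw [hdet, Real.log_mul hdetA.ne' hXdet.ne']
  have ha1 : a * Real.log A.det = Real.log A.det - b * Real.log A.det := by
    rw [show a = 1 - b from by linarith]; ring
  linarith
end aux


open Matrix

section quad
lemma quad_convex {m : ℕ} {M : Matrix (Fin m) (Fin m) ℝ} (hM : M.PosSemidef)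
    (x y : Fin m → ℝ) {a b : ℝ} (ha : 0 ≤ a) (hb : 0 ≤ b) (hab : a + b = 1) :
    (a • x + b • y) ⬝ᵥ M *ᵥ (a • x + b • y) ≤ a * (x ⬝ᵥ M *ᵥ x) + b * (y ⬝ᵥ M *ᵥ y) := by
  have hMT : Mᵀ = M := by
    ext i j
    have := congrFun (congrFun hM.1 i) j
    simpa using this
  have hsym : ∀ u v : Fin m → ℝ, u ⬝ᵥ M *ᵥ v = v ⬝ᵥ M *ᵥ u := by
    intro u v
    rw [dotProduct_mulVec, ← mulVec_transpose, hMT, dotProduct_comm]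
  have hq : 0 ≤ (x - y) ⬝ᵥ M *ᵥ (x - y) := by simpa using hM.dotProduct_mulVec_nonneg (x - y)
  have e : (a • x + b • y) ⬝ᵥ M *ᵥ (a • x + b • y)
      = a * a * (x ⬝ᵥ M *ᵥ x) + a * b * (x ⬝ᵥ M *ᵥ y)
        + a * b * (y ⬝ᵥ M *ᵥ x) + b * b * (y ⬝ᵥ M *ᵥ y) := by
    simp only [mulVec_add, mulVec_smul, dotProduct_add, add_dotProduct, dotProduct_smul,
      smul_dotProduct, smul_eq_mul]
    ring
  have e2 : (x - y) ⬝ᵥ M *ᵥ (x - y)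
      = (x ⬝ᵥ M *ᵥ x) - (x ⬝ᵥ M *ᵥ y) - (y ⬝ᵥ M *ᵥ x) + (y ⬝ᵥ M *ᵥ y) := by
    simp only [mulVec_sub, dotProduct_sub, sub_dotProduct]
    ring
  have h4 : 0 ≤ a * b * ((x - y) ⬝ᵥ M *ᵥ (x - y)) := mul_nonneg (mul_nonneg ha hb) hq
  have hs := hsym x y
  have key : a * (x ⬝ᵥ M *ᵥ x) + b * (y ⬝ᵥ M *ᵥ y)
      - (a • x + b • y) ⬝ᵥ M *ᵥ (a • x + b • y)
      = a * b * ((x - y) ⬝ᵥ M *ᵥ (x - y)) := by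
    rw [e, e2, hs]
    linear_combination (-(a * (x ⬝ᵥ M *ᵥ x) + b * (y ⬝ᵥ M *ᵥ y))) * hab
  linarith [key, h4]
end quad

/-- Joint convexity of variational inference and maximum likelihood parameter
estimation: the objective
`F(r, ψ, S) = (1/(2σ²))·‖r − Pψ‖² + (1/(2σ²))·tr(P S Pᵀ) + (1/2)·⟪ψ, K⁻¹ψ⟫
+ (1/2)·tr(K⁻¹ S) − (1/2)·log det S` is convex on
`ℝᵗ × ℝⁿ × {positive definite matrices}`, which is a convex set. -/
theorem variational_objective_jointly_convex (n t : ℕ)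
    (K : Matrix (Fin n) (Fin n) ℝ) (hK : K.PosDef)
    (P : Matrix (Fin t) (Fin n) ℝ) (σ : ℝ) (hσ : 0 < σ) :
    let F : (Fin t → ℝ) × (Fin n → ℝ) × Matrix (Fin n) (Fin n) ℝ → ℝ := fun p =>
      (1 / (2 * σ ^ 2)) * (∑ i, (p.1 i - P.mulVec p.2.1 i) ^ 2)
        + (1 / (2 * σ ^ 2)) * (P * p.2.2 * Pᵀ).trace
        + (1 / 2) * (∑ i, p.2.1 i * K⁻¹.mulVec p.2.1 i)
        + (1 / 2) * (K⁻¹ * p.2.2).trace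
        - (1 / 2) * Real.log p.2.2.det
    let D : Set ((Fin t → ℝ) × (Fin n → ℝ) × Matrix (Fin n) (Fin n) ℝ) :=
      {p | p.2.2.PosDef}
    Convex ℝ D ∧ ConvexOn ℝ D F := by
  intro F D
  have hD : Convex ℝ D := by
    rintro p hp q hq a b ha hb hab
    exact posDef_smul_add hp hq ha hb hab
  refine ⟨hD, hD, ?_⟩
  rintro ⟨r1, ψ1, S1⟩ hp ⟨r2, ψ2, S2⟩ hq a b ha hb hab
  have hS1 : S1.PosDef := hp
  have hS2 : S2.PosDef := hq
  have hc1 : (0:ℝ) ≤ 1 / (2 * σ ^ 2) := by positivity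
  simp only [F, Prod.smul_mk, Prod.mk_add_mk, smul_eq_mul]
  -- T1
  have h1 : ∑ i, ((a • r1 + b • r2) i - P.mulVec (a • ψ1 + b • ψ2) i) ^ 2
      ≤ a * ∑ i, (r1 i - P.mulVec ψ1 i) ^ 2 + b * ∑ i, (r2 i - P.mulVec ψ2 i) ^ 2 := by
    rw [Finset.mul_sum, Finset.mul_sum, ← Finset.sum_add_distrib]
    apply Finset.sum_le_sum
    intro i _
    have hv : P.mulVec (a • ψ1 + b • ψ2) i = a * P.mulVec ψ1 i + b * P.mulVec ψ2 i := by
      rw [mulVec_add, mulVec_smul, mulVec_smul]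
      simp [smul_eq_mul]
    have hu : (a • r1 + b • r2) i = a * r1 i + b * r2 i := by
      simp [smul_eq_mul]
    rw [hv, hu]
    nlinarith [sq_nonneg ((r1 i - P.mulVec ψ1 i) - (r2 i - P.mulVec ψ2 i)),
      mul_nonneg ha hb]
  have h1' := mul_le_mul_of_nonneg_left h1 hc1
  -- T2
  have h2 : (P * (a • S1 + b • S2) * Pᵀ).trace
      = a * (P * S1 * Pᵀ).trace + b * (P * S2 * Pᵀ).trace := by
    rw [Matrix.mul_add, Matrix.add_mul, Matrix.mul_smul, Matrix.mul_smul, Matrix.smul_mul,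
      Matrix.smul_mul, trace_add, trace_smul, trace_smul, smul_eq_mul, smul_eq_mul]
  -- T3
  have h3 : ∑ i, (a • ψ1 + b • ψ2) i * K⁻¹.mulVec (a • ψ1 + b • ψ2) i
      ≤ a * ∑ i, ψ1 i * K⁻¹.mulVec ψ1 i + b * ∑ i, ψ2 i * K⁻¹.mulVec ψ2 i :=
    quad_convex hK.inv.posSemidef ψ1 ψ2 ha hb hab
  have h3' := mul_le_mul_of_nonneg_left h3 (by norm_num : (0:ℝ) ≤ 1 / 2)
  -- T4
  have h4 : (K⁻¹ * (a • S1 + b • S2)).trace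
      = a * (K⁻¹ * S1).trace + b * (K⁻¹ * S2).trace := by
    rw [Matrix.mul_add, Matrix.mul_smul, Matrix.mul_smul, trace_add, trace_smul, trace_smul,
      smul_eq_mul, smul_eq_mul]
  -- T5
  have h5 : a * Real.log S1.det + b * Real.log S2.det
      ≤ Real.log (a • S1 + b • S2).det := logdet_concave hS1 hS2 ha hb hab
  have h5' := mul_le_mul_of_nonneg_left h5 (by norm_num : (0:ℝ) ≤ 1 / 2)
  nlinarith [h1', h3', h5', h2, h4, mul_le_mul_of_nonneg_left h1 hc1]
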